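/- For a positive integer s, [D_X, (1+Δ)^s]Y = Σ_{k=1}^{s} (−1)^k C(s,k) Σ_{j=0}^{2k−1} ∇_{γ̇}^j ( R(X,γ̇) ∇_{γ̇}^{2k−1−j} Y ), where C(s,k) is the binomial coefficient. -/
import Mathlib

open scoped BigOperators

lemma comm_pow_aux {A : Type*} [Ring A] (g D R : A) (h : D * g - g * D = R) :
    ∀ n : ℕ, D * g ^ n - g ^ n * D = ∑ j ∈ Finset.range n, g ^ j * R * g ^ (n - 1 - j) := by
  intro n
  induction n with
  | zero => simp
  | succ n ih =>
    have key : D * g ^ (n+1) - g ^ (n+1) * D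
        = (D * g ^ n - g ^ n * D) * g + g ^ n * (D * g - g * D) := by
      rw [pow_succ]; noncomm_ring
    rw [key, ih, h, Finset.sum_range_succ, Finset.sum_mul]
    congr 1
    · apply Finset.sum_congr rfl
      intro j hj
      have hj' := Finset.mem_range.mp hj
      rw [mul_assoc, ← pow_succ]
      congr 2
      omega
    · have : n + 1 - 1 - n = 0 := by omega
      simp [this]

theorem statement_3 {V : Type*} [AddCommGroup V] [Module ℝ V]
    (grad D R : Module.End ℝ V)
    (hcomm : D * grad - grad * D = R)
    (s : ℕ) (hs : 0 < s) :
    ∀ Y : V,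
      (D * (1 + -(grad * grad)) ^ s - (1 + -(grad * grad)) ^ s * D) Y
        = ∑ k ∈ Finset.Icc 1 s,
            ((-1 : ℝ) ^ k * (s.choose k : ℝ)) •
              ∑ j ∈ Finset.range (2 * k),
                (grad ^ j) (R ((grad ^ (2 * k - 1 - j)) Y)) := by
  have hop : D * (1 + -(grad * grad)) ^ s - (1 + -(grad * grad)) ^ s * D
      = ∑ k ∈ Finset.Icc 1 s,
          ((-1 : ℝ) ^ k * (s.choose k : ℝ)) •
            ∑ j ∈ Finset.range (2 * k), grad ^ j * R * grad ^ (2 * k - 1 - j) := by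
    have hΔ : (1 + -(grad * grad) : Module.End ℝ V) = -(grad*grad) + 1 := add_comm _ _
    have hexp : ((1 : Module.End ℝ V) + -(grad * grad)) ^ s
        = ∑ m ∈ Finset.range (s+1), (-(grad*grad))^m * ((s.choose m : ℕ) : Module.End ℝ V) := by
      rw [hΔ, (Commute.one_right (-(grad*grad) : Module.End ℝ V)).add_pow]
      simp
    rw [hexp, Finset.mul_sum, Finset.sum_mul, ← Finset.sum_sub_distrib]
    have hterm : ∀ m ∈ Finset.range (s+1),
        D * ((-(grad*grad))^m * ((s.choose m : ℕ) : Module.End ℝ V))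
          - (-(grad*grad))^m * ((s.choose m : ℕ) : Module.End ℝ V) * D
        = ((-1 : ℝ) ^ m * (s.choose m : ℝ)) •
            ∑ j ∈ Finset.range (2 * m), grad ^ j * R * grad ^ (2 * m - 1 - j) := by
      intro m _
      have hneg : (-(grad*grad) : Module.End ℝ V)^m = ((-1:ℝ)^m) • grad ^ (2*m) := by
        have hg : (grad*grad : Module.End ℝ V)^m = grad ^ (2*m) := by
          rw [← sq, ← pow_mul]
        rcases Nat.even_or_odd m with he | ho
        · rw [he.neg_pow, hg, he.neg_one_pow, one_smul]
        · rw [ho.neg_pow, hg, ho.neg_one_pow, neg_one_smul]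
      have hcast : ((s.choose m : ℕ) : Module.End ℝ V) * D
            = ((s.choose m : ℝ)) • D := by
        symm; rw [Nat.cast_smul_eq_nsmul, nsmul_eq_mul]
      have hcast2 : grad ^ (2*m) * ((s.choose m : ℕ) : Module.End ℝ V)
            = ((s.choose m : ℝ)) • grad ^ (2*m) := by
        rw [(Nat.cast_commute (s.choose m) (grad ^ (2*m))).symm.eq,
          ]
        symm; rw [Nat.cast_smul_eq_nsmul, nsmul_eq_mul]
      have h1 : (-(grad*grad) : Module.End ℝ V)^m * ((s.choose m : ℕ) : Module.End ℝ V)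
          = ((-1:ℝ)^m * (s.choose m : ℝ)) • grad ^ (2*m) := by
        rw [hneg, smul_mul_assoc, hcast2, smul_smul]
      rw [h1, mul_smul_comm, smul_mul_assoc, ← smul_sub,
        comm_pow_aux grad D R hcomm (2*m)]
    rw [Finset.sum_congr rfl hterm]
    symm
    apply Finset.sum_subset
    · intro x hx; simp at hx ⊢; omega
    · intro x hx hnx
      have : x = 0 := by simp at hx hnx; omega
      simp [this]
  intro Y
  have := congrArg (fun f : Module.End ℝ V => f Y) hop
  simp only [LinearMap.sub_apply] at this ⊢
  rw [this]
  simp [LinearMap.sum_apply, LinearMap.smul_apply, Module.End.mul_apply]
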